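/- Let g ∈ F_q[x] be a polynomial of degree k dividing x^m − 1, and let β ∈ F_{q^m} be a normal element over F_q. Then ξ = g ∘ β (the image of β under the linearized action of g) is a k-normal element of F_{q^m} over F_q. -/
import Mathlib


/-- The linearized action of a polynomial `f = Σ aᵢ xⁱ` over `F_q` on `ξ ∈ F_{q^m}`:
`f ∘ ξ = Σ aᵢ ξ^{qⁱ}`. -/
noncomputable def polyAct {Fq F : Type} [Field Fq] [Field F] [Algebra Fq F]
    (q : ℕ) (f : Polynomial Fq) (ξ : F) : F :=
  f.sum fun i a => algebraMap Fq F a * ξ ^ q ^ i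

open Polynomial

lemma ker_aeval_finrank_le {Fq F : Type} [Field Fq] [Field F] [Fintype Fq] [Fintype F]
    [Algebra Fq F] (q : ℕ) (hq : Fintype.card Fq = q) (hq1 : 1 < q)
    (L : F →ₗ[Fq] F) (hL : ∀ (i : ℕ) (x : F), (L ^ i) x = x ^ q ^ i)
    (f : Polynomial Fq) (hf : f ≠ 0) :
    Module.finrank Fq (LinearMap.ker (Polynomial.aeval L f)) ≤ f.natDegree := by
  classical
  set d := f.natDegree with hd
  set P : Polynomial F := ∑ i ∈ f.support, C (algebraMap Fq F (f.coeff i)) * X ^ q ^ i with hP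
  have hcoeff : P.coeff (q ^ d) = algebraMap Fq F (f.coeff d) := by
    rw [hP, finset_sum_coeff]
    rw [Finset.sum_eq_single d]
    · simp [coeff_X_pow]
    · intro i hi hne
      have : q ^ d ≠ q ^ i := fun h => hne (Nat.pow_right_injective hq1 h.symm)
      simp [coeff_X_pow, this]
    · intro hd'
      simp [Polynomial.notMem_support_iff.mp hd']
  have hPne : P ≠ 0 := by
    intro h
    have h2 := hcoeff
    rw [h] at h2
    simp only [coeff_zero] at h2
    have h3 : f.coeff d = 0 :=
      (map_eq_zero_iff _ (algebraMap Fq F).injective).mp h2.symm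
    exact hf (Polynomial.leadingCoeff_eq_zero.mp (by rwa [Polynomial.leadingCoeff, ← hd]))
  have hdegP : P.natDegree ≤ q ^ d := by
    rw [hP]
    refine (Polynomial.natDegree_sum_le _ _).trans ?_
    rw [Finset.fold_max_le]
    refine ⟨Nat.zero_le _, fun i hi => ?_⟩
    refine (natDegree_C_mul_le _ _).trans ?_
    simp only [natDegree_X_pow]
    exact Nat.pow_le_pow_right (le_of_lt hq1) (Polynomial.le_natDegree_of_mem_supp i hi)
  have hroot : ∀ x : F, (Polynomial.aeval L f) x = P.eval x := by
    intro x
    rw [Polynomial.aeval_def, Polynomial.eval₂_eq_sum, Polynomial.sum_def, hP,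
      Polynomial.eval_finset_sum]
    simp only [LinearMap.coe_sum, Finset.sum_apply, Module.End.mul_apply,
      Module.algebraMap_end_apply, eval_mul, eval_C, eval_pow, eval_X]
    refine Finset.sum_congr rfl fun i _ => ?_
    rw [hL, Algebra.smul_def]
  -- card bound
  have hcard : Fintype.card (LinearMap.ker (Polynomial.aeval L f)) ≤ q ^ d := by
    have hinj : Function.Injective
        (fun x : LinearMap.ker (Polynomial.aeval L f) =>
          (⟨x.1, by
            rw [Multiset.mem_toFinset, Polynomial.mem_roots hPne, Polynomial.IsRoot,
              ← hroot]
            exact x.2⟩ :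
            P.roots.toFinset)) := by
      intro a b hab
      simp only [Subtype.mk.injEq] at hab
      exact Subtype.ext hab
    calc Fintype.card (LinearMap.ker (Polynomial.aeval L f))
        ≤ Fintype.card P.roots.toFinset := Fintype.card_le_of_injective _ hinj
      _ = P.roots.toFinset.card := Fintype.card_coe _
      _ ≤ Multiset.card P.roots := P.roots.toFinset_card_le
      _ ≤ P.natDegree := P.card_roots' 
      _ ≤ q ^ d := hdegP
  have hcard2 : Fintype.card (LinearMap.ker (Polynomial.aeval L f))
      = q ^ Module.finrank Fq (LinearMap.ker (Polynomial.aeval L f)) := by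
    rw [← hq]
    exact Module.card_eq_pow_finrank
  rw [hcard2] at hcard
  exact (Nat.pow_le_pow_iff_right hq1).mp hcard

/-- if `g ∈ F_q[x]` has degree `k` and divides `x^m - 1`, and
`β ∈ F_{q^m}` is normal over `F_q`, then `ξ = g ∘ β` is `k`-normal over `F_q`
(the span of its Frobenius conjugates has dimension `m - k`). -/
theorem stmt_8 (p s q m k : ℕ) (hp : p.Prime) (hs : 0 < s) (hq : q = p ^ s)
    (hm : 0 < m)
    (Fq F : Type) [Field Fq] [Field F] [Fintype Fq] [Fintype F] [Algebra Fq F]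
    (hcardq : Fintype.card Fq = q) (hcardF : Fintype.card F = q ^ m)
    (g : Polynomial Fq) (hgdeg : g.natDegree = k)
    (hgdvd : g ∣ Polynomial.X ^ m - 1)
    (β : F)
    (hβnormal : Module.finrank Fq
      ↥(Submodule.span Fq (Set.range fun i : Fin m => β ^ q ^ (i : ℕ))) = m) :
    Module.finrank Fq
      ↥(Submodule.span Fq
        (Set.range fun i : Fin m => (polyAct q g β) ^ q ^ (i : ℕ))) = m - k := by
  classical
  haveI : Fact p.Prime := ⟨hp⟩
  have hq1 : 1 < q := by
    rw [hq]; exact Nat.one_lt_pow hs.ne' hp.one_lt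
  -- characteristic of F is p
  haveI hpF : CharP F p := by
    obtain ⟨n, hrp, hcard⟩ := FiniteField.card F (ringChar F)
    have hpd : p ∣ ringChar F := by
      refine hp.dvd_of_dvd_pow (n := (n : ℕ)) ?_
      rw [← hcard, hcardF, hq, ← pow_mul]
      exact dvd_pow_self p (Nat.mul_ne_zero hs.ne' hm.ne')
    have hpe : p = ringChar F := (Nat.prime_dvd_prime_iff_eq hp hrp).mp hpd
    exact hpe ▸ ringChar.charP F
  -- the Frobenius linear map
  let L : F →ₗ[Fq] F :=
  { toFun := fun x => x ^ q
    map_add' := fun x y => by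
      simp only [hq]
      exact add_pow_char_pow x y p s
    map_smul' := fun c x => by
      simp only [RingHom.id_apply, Algebra.smul_def, mul_pow, ← map_pow]
      rw [← hcardq, FiniteField.pow_card] }
  have hLapp : ∀ x : F, L x = x ^ q := fun x => rfl
  have hLpow : ∀ (i : ℕ) (x : F), (L ^ i) x = x ^ q ^ i := by
    intro i
    induction i with
    | zero => intro x; simp
    | succ n ih =>
      intro x
      rw [pow_succ', Module.End.mul_apply, hLapp, ih, ← pow_mul, ← pow_succ]
  have haeval : ∀ (f : Polynomial Fq) (x : F), (Polynomial.aeval L f) x = polyAct q f x := by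
    intro f x
    rw [Polynomial.aeval_def, Polynomial.eval₂_eq_sum, polyAct, Polynomial.sum_def,
      Polynomial.sum_def]
    simp only [LinearMap.coe_sum, Finset.sum_apply, Module.End.mul_apply,
      Module.algebraMap_end_apply]
    exact Finset.sum_congr rfl fun i _ => by rw [hLpow, Algebra.smul_def]
  have hLm : L ^ m = 1 := by
    ext x
    rw [hLpow, Module.End.one_apply, ← hcardF, FiniteField.pow_card]
  have hdimF : Module.finrank Fq F = m := by
    have h1 : Fintype.card F = q ^ Module.finrank Fq F := by
      rw [← hcardq]; exact Module.card_eq_pow_finrank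
    rw [hcardF] at h1
    exact Nat.pow_right_injective hq1 h1.symm
  have hspan : Submodule.span Fq (Set.range fun i : Fin m => β ^ q ^ (i : ℕ)) = ⊤ :=
    Submodule.eq_top_of_finrank_eq (by rw [hβnormal, hdimF])
  -- factor x^m - 1 = g * h
  obtain ⟨h, hfac⟩ := hgdvd
  have hXm_ne : (X ^ m - 1 : Polynomial Fq) ≠ 0 := by
    simpa using Polynomial.X_pow_sub_C_ne_zero hm (1 : Fq)
  have hg0 : g ≠ 0 := fun h0 => hXm_ne (by rw [hfac, h0, zero_mul])
  have hh0 : h ≠ 0 := fun h0 => hXm_ne (by rw [hfac, h0, mul_zero])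
  have hdegXm : (X ^ m - 1 : Polynomial Fq).natDegree = m := by
    have := Polynomial.natDegree_X_pow_sub_C (n := m) (r := (1 : Fq))
    simpa using this
  have hdegs : k + h.natDegree = m := by
    rw [← hgdeg, ← Polynomial.natDegree_mul hg0 hh0, ← hfac, hdegXm]
  have hGH : (Polynomial.aeval L g) * (Polynomial.aeval L h) = 0 := by
    rw [← map_mul, ← hfac, map_sub, map_pow, Polynomial.aeval_X, map_one, hLm, sub_self]
  have hkg : Module.finrank Fq (LinearMap.ker (Polynomial.aeval L g)) ≤ k := by
    have := ker_aeval_finrank_le q hcardq hq1 L hLpow g hg0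
    rwa [hgdeg] at this
  have hkh : Module.finrank Fq (LinearMap.ker (Polynomial.aeval L h)) ≤ m - k :=
    (ker_aeval_finrank_le q hcardq hq1 L hLpow h hh0).trans (by omega)
  have hrange : LinearMap.range (Polynomial.aeval L h) ≤ LinearMap.ker (Polynomial.aeval L g) := by
    rintro x ⟨y, rfl⟩
    rw [LinearMap.mem_ker, ← Module.End.mul_apply, hGH, LinearMap.zero_apply]
  have hrnH := LinearMap.finrank_range_add_finrank_ker
    (Polynomial.aeval L h : Module.End Fq F)
  have hrnG := LinearMap.finrank_range_add_finrank_ker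
    (Polynomial.aeval L g : Module.End Fq F)
  rw [hdimF] at hrnH hrnG
  have hmono := Submodule.finrank_mono hrange
  have hkerG : Module.finrank Fq (LinearMap.ker (Polynomial.aeval L g)) = k := by omega
  -- rewrite the span
  have hfun : (fun i : Fin m => (polyAct q g β) ^ q ^ (i : ℕ))
      = fun i : Fin m => (Polynomial.aeval L g) (β ^ q ^ (i : ℕ)) := by
    funext i
    have hcomm : Commute (Polynomial.aeval L g) ((L : Module.End Fq F) ^ (i : ℕ)) := by
      have := (Commute.all g ((X : Polynomial Fq) ^ (i : ℕ))).map
        (Polynomial.aeval L).toRingHom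
      simpa using this
    rw [← hLpow (i : ℕ) (polyAct q g β), ← haeval g β, ← Module.End.mul_apply, ← hcomm.eq,
      Module.End.mul_apply, hLpow]
  rw [hfun]
  have himg : (Set.range fun i : Fin m => (Polynomial.aeval L g) (β ^ q ^ (i : ℕ)))
      = (Polynomial.aeval L g) '' (Set.range fun i : Fin m => β ^ q ^ (i : ℕ)) := by
    rw [← Set.range_comp]; rfl
  rw [himg, ← Submodule.map_span, hspan, Submodule.map_top]
  omega
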